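/- Let W : ℝ × ℝ² → ℝ be continuously differentiable in the first (time) variable and twice continuously differentiable in the second (phase-space) variable, satisfying the diffusion equation ∂W/∂t(t,v) = ½ Δ_v W(t,v). Fix t₀, and assume: (i) W(t₀,·) is integrable; (ii) there is an integrable function g : ℝ² → ℝ with |∂W/∂t(t,v)| ≤ g(v) for all t in a neighborhood of t₀ and all v; (iii) the set {v : W(t₀,v) = 0} has Lebesgue measure zero; (iv) Δ_v W(t₀,·) is integrable on {v : W(t₀,v) < 0}. Then the function t ↦ Vol₋(W(t,·)) is differentiable at t₀ with derivative −½ ∫_{{v : W(t₀,v) < 0}} Δ_v W(t₀,v) dv; equivalently, d/dt h_i(W(t,·)) at t₀ equals ½ J_i(W(t₀,·)). This is the imaginary part of the complex de Bruijn identity. -/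

import Mathlib

open MeasureTheory

/-- The Laplacian of a function on the phase plane. -/
noncomputable def lap (W : EuclideanSpace ℝ (Fin 2) → ℝ)
    (v : EuclideanSpace ℝ (Fin 2)) : ℝ :=
  ∑ i : Fin 2,
    fderiv ℝ (fun u => fderiv ℝ W u (EuclideanSpace.single i 1)) v
      (EuclideanSpace.single i 1)

lemma lap_continuous (W : EuclideanSpace ℝ (Fin 2) → ℝ) (hW : ContDiff ℝ 2 W) :
    Continuous (lap W) := by
  apply continuous_finset_sum
  intro i _
  have h1 : ContDiff ℝ 1 (fderiv ℝ W) := hW.fderiv_right (by norm_num)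
  have h2 : ContDiff ℝ 1 (fun u => fderiv ℝ W u (EuclideanSpace.single i 1)) :=
    h1.clm_apply contDiff_const
  have h3 : Continuous (fderiv ℝ (fun u => fderiv ℝ W u (EuclideanSpace.single i 1))) :=
    h2.continuous_fderiv one_ne_zero
  exact h3.clm_apply continuous_const

/-- Imaginary part of the complex de Bruijn identity: under the diffusion
equation `∂W/∂t = ½ ΔW`, the negative volume `Vol₋(W(t,·)) = -∫_{W<0} W` is
differentiable in time with derivative `-½ ∫_{W<0} ΔW`; equivalently
`d/dt h_i = ½ J_i`. -/
theorem complex_deBruijn_imaginary_part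
    (W : ℝ → EuclideanSpace ℝ (Fin 2) → ℝ)
    (hWt : ∀ v, ContDiff ℝ 1 fun t => W t v)
    (hWv : ∀ t, ContDiff ℝ 2 (W t))
    (hdiffusion : ∀ t v, deriv (fun s => W s v) t = (1 / 2) * lap (W t) v)
    (t₀ : ℝ)
    (hint : Integrable (W t₀))
    (hdom : ∃ g : EuclideanSpace ℝ (Fin 2) → ℝ, Integrable g ∧
      ∀ᶠ t in nhds t₀, ∀ v, |deriv (fun s => W s v) t| ≤ g v)
    (hzero : volume {v | W t₀ v = 0} = 0)
    (hlap : IntegrableOn (lap (W t₀)) {v | W t₀ v < 0}) :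
    HasDerivAt (fun t => -∫ v in {v | W t v < 0}, W t v)
      (-(1 / 2) * ∫ v in {v | W t₀ v < 0}, lap (W t₀) v) t₀ := by
  obtain ⟨g, hg_int, hg_bound⟩ := hdom
  obtain ⟨ε, ε_pos, hε⟩ := Metric.eventually_nhds_iff.mp hg_bound
  -- the measurable sets
  have hopen : ∀ t, IsOpen {v | W t v < 0} := fun t =>
    isOpen_lt (hWv t).continuous continuous_const
  have hmeas : ∀ t, MeasurableSet {v | W t v < 0} := fun t => (hopen t).measurableSet
  -- F and F'
  set F : ℝ → EuclideanSpace ℝ (Fin 2) → ℝ := fun t v => min (W t v) 0 with hF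
  set F' : EuclideanSpace ℝ (Fin 2) → ℝ :=
    ({v | W t₀ v < 0}).indicator (fun v => (1 / 2) * lap (W t₀) v) with hF'
  have hFind : ∀ t, ({v | W t v < 0}).indicator (W t) = F t := by
    intro t; funext v
    by_cases h : W t v < 0
    · simp [Set.indicator, h, hF, min_eq_left h.le]
    · simp [Set.indicator, h, hF, min_eq_right (not_lt.mp h)]
  have hF_meas : ∀ᶠ t in nhds t₀, AEStronglyMeasurable (F t) volume := by
    filter_upwards with t
    exact (((hWv t).continuous).min continuous_const).aestronglyMeasurable
  have hF_int : Integrable (F t₀) volume := by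
    refine hint.mono (((hWv t₀).continuous.min continuous_const).aestronglyMeasurable)
      (Filter.Eventually.of_forall fun v => ?_)
    simp only [Real.norm_eq_abs, F]
    rcases le_or_gt (W t₀ v) 0 with h | h
    · rw [min_eq_left h]
    · rw [min_eq_right h.le]; simp [abs_of_pos h, le_abs_self, h.le]
  have hF'_meas : AEStronglyMeasurable F' volume := by
    refine AEStronglyMeasurable.indicator ?_ (hmeas t₀)
    exact (continuous_const.mul (lap_continuous _ (hWv t₀))).aestronglyMeasurable
  have h_lip : ∀ᵐ v ∂(volume : Measure (EuclideanSpace ℝ (Fin 2))),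
      LipschitzOnWith (Real.nnabs (g v)) (fun t => F t v) (Metric.ball t₀ ε) := by
    refine Filter.Eventually.of_forall fun v => ?_
    have hW_lip : LipschitzOnWith (Real.nnabs (g v)) (fun t => W t v) (Metric.ball t₀ ε) := by
      apply Convex.lipschitzOnWith_of_nnnorm_deriv_le
        (f := fun t => W t v)
        (fun t _ => ((hWt v).differentiable one_ne_zero).differentiableAt)
        ?_ (convex_ball t₀ ε)
      intro t ht
      have := hε (show dist t t₀ < ε from Metric.mem_ball.mp ht) v
      simp only [← NNReal.coe_le_coe, coe_nnnorm, Real.norm_eq_abs, Real.coe_nnabs]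
      exact this.trans (le_abs_self _)
    have hmin : LipschitzWith 1 (fun x : ℝ => min x 0) :=
      LipschitzWith.min_const LipschitzWith.id 0
    have := hmin.comp_lipschitzOnWith hW_lip
    simpa [one_mul, Function.comp_def, F] using this
  have h_diff : ∀ᵐ v ∂(volume : Measure (EuclideanSpace ℝ (Fin 2))),
      HasDerivAt (fun t => F t v) (F' v) t₀ := by
    have hae : ∀ᵐ v ∂(volume : Measure (EuclideanSpace ℝ (Fin 2))), W t₀ v ≠ 0 := by
      rw [MeasureTheory.ae_iff]
      simpa using hzero
    filter_upwards [hae] with v hv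
    have hcont : Continuous fun t => W t v := (hWt v).continuous
    have hder : HasDerivAt (fun t => W t v) (deriv (fun s => W s v) t₀) t₀ :=
      (((hWt v).differentiable one_ne_zero).differentiableAt).hasDerivAt
    rcases hv.lt_or_gt with h | h
    · -- W t₀ v < 0
      have hev : (fun t => F t v) =ᶠ[nhds t₀] fun t => W t v := by
        have : ∀ᶠ t in nhds t₀, W t v < 0 :=
          (hcont.continuousAt).eventually_lt continuousAt_const h
        filter_upwards [this] with t ht
        simp [F, min_eq_left ht.le]
      have hF'v : F' v = deriv (fun s => W s v) t₀ := by
        simp [F', Set.indicator_of_mem, h, hdiffusion t₀ v]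
      rw [hF'v]
      exact hder.congr_of_eventuallyEq hev
    · -- W t₀ v > 0
      have hev : (fun t => F t v) =ᶠ[nhds t₀] fun _ => (0 : ℝ) := by
        have : ∀ᶠ t in nhds t₀, (0:ℝ) < W t v :=
          continuousAt_const.eventually_lt hcont.continuousAt h
        filter_upwards [this] with t ht
        simp [F, min_eq_right ht.le]
      have hF'v : F' v = 0 := by
        simp [F', Set.indicator_of_notMem, not_lt.mpr h.le]
      rw [hF'v]
      exact (hasDerivAt_const t₀ (0 : ℝ)).congr_of_eventuallyEq hev
  have key := (hasDerivAt_integral_of_dominated_loc_of_lip (Metric.ball_mem_nhds t₀ ε_pos) hF_meas hF_int hF'_meas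
    h_lip hg_int h_diff).2
  have hInt' : (∫ v, F' v) = (1 / 2) * ∫ v in {v | W t₀ v < 0}, lap (W t₀) v := by
    rw [hF', integral_indicator (hmeas t₀), integral_const_mul]
  have hfun : (fun t => -∫ v in {v | W t v < 0}, W t v) = fun t => -∫ v, F t v := by
    funext t
    rw [← integral_indicator (hmeas t), hFind t]
  rw [hfun]
  have : HasDerivAt (fun x => -∫ a, F x a) (-(∫ a, F' a)) t₀ := key.neg
  rw [hInt'] at this
  convert this using 1
  ring
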